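/- For every y ∈ ℝ^M and every λ > 0, the set of minimizers of problem (P) is nonempty and compact if and only if ker(Φ) ∩ ker(L*) = {0}. -/

import Mathlib

open RealInnerProductSpace

noncomputable section

abbrev Euc (n : ℕ) := EuclideanSpace ℝ (Fin n)

def proj {n : ℕ} (V : Submodule ℝ (Euc n)) : Euc n →L[ℝ] Euc n :=
  V.subtypeL.comp (Submodule.orthogonalProjection V)

def dualNorm {n : ℕ} (A : Euc n → ℝ) (α : Euc n) : ℝ :=
  sSup {r : ℝ | ∃ v : Euc n, A v ≤ 1 ∧ r = ⟪α, v⟫}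

def subdiff {n : ℕ} (f : Euc n → ℝ) (x : Euc n) : Set (Euc n) :=
  {g : Euc n | ∀ y : Euc n, f x + ⟪g, y - x⟫ ≤ f y}

def IsNorm {n : ℕ} (A : Euc n → ℝ) : Prop :=
  (∀ x, A x = 0 ↔ x = 0) ∧ (∀ (c : ℝ) (x : Euc n), A (c • x) = |c| * A x) ∧
    (∀ x y, A (x + y) ≤ A x + A y)

def Decomposable {n : ℕ} (A : Euc n → ℝ) (u : Euc n) (T : Submodule ℝ (Euc n)) (e : Euc n) :
    Prop :=
  e ∈ T ∧
  subdiff A u = {α : Euc n | proj T α = e ∧ dualNorm A (proj Tᗮ α) ≤ 1} ∧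
  ∀ z : Euc n, z ∈ Tᗮ →
    A z = sSup {r : ℝ | ∃ v ∈ (Tᗮ : Submodule ℝ (Euc n)), dualNorm A v ≤ 1 ∧ r = ⟪v, z⟫}

def obj {N M P : ℕ} (Φ : Euc N →L[ℝ] Euc M) (L : Euc P →L[ℝ] Euc N) (A : Euc P → ℝ)
    (y : Euc M) (lam : ℝ) (x : Euc N) : ℝ :=
  (1/2) * ‖y - Φ x‖^2 + lam * A (ContinuousLinearMap.adjoint L x)

def SC {N M P : ℕ} (Φ : Euc N →L[ℝ] Euc M) (L : Euc P →L[ℝ] Euc N) (A : Euc P → ℝ)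
    (x : Euc N) (η : Euc M) (α : Euc P) : Prop :=
  α ∈ subdiff A (ContinuousLinearMap.adjoint L x) ∧
  ContinuousLinearMap.adjoint Φ η = L α ∧
  L α ∈ subdiff (fun z => A (ContinuousLinearMap.adjoint L z)) x

def breg {n : ℕ} (A : Euc n → ℝ) (α u u₀ : Euc n) : ℝ :=
  A u - A u₀ - ⟪α, u - u₀⟫


lemma IsNorm.zero {n : ℕ} {A : Euc n → ℝ} (hA : IsNorm A) : A 0 = 0 := (hA.1 0).mpr rfl
lemma IsNorm.neg {n : ℕ} {A : Euc n → ℝ} (hA : IsNorm A) (x : Euc n) : A (-x) = A x := by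
  have := hA.2.1 (-1) x; simpa using this
lemma IsNorm.nonneg {n : ℕ} {A : Euc n → ℝ} (hA : IsNorm A) (x : Euc n) : 0 ≤ A x := by
  have h := hA.2.2 x (-x)
  rw [add_neg_cancel, hA.zero, hA.neg] at h
  linarith
lemma IsNorm.continuous {n : ℕ} {A : Euc n → ℝ} (hA : IsNorm A) : Continuous A := by
  have hconv : ConvexOn ℝ Set.univ A := by
    refine ⟨convex_univ, fun x _ y _ a b ha hb hab => ?_⟩
    calc A (a • x + b • y) ≤ A (a • x) + A (b • y) := hA.2.2 _ _
      _ = a * A x + b * A y := by rw [hA.2.1, hA.2.1, abs_of_nonneg ha, abs_of_nonneg hb]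
  exact hconv.locallyLipschitz.continuous

-- coercivity bound
lemma coercive_bound {N M P : ℕ} (Φ : Euc N →L[ℝ] Euc M) (L : Euc P →L[ℝ] Euc N)
    {A : Euc P → ℝ} (hA : IsNorm A)
    (hker : ∀ h : Euc N, Φ h = 0 → ContinuousLinearMap.adjoint L h = 0 → h = 0) :
    ∃ c > 0, ∀ x : Euc N, c * ‖x‖ ≤ ‖Φ x‖ + A (ContinuousLinearMap.adjoint L x) := by
  set L' := ContinuousLinearMap.adjoint L with hL'
  set g : Euc N → ℝ := fun x => ‖Φ x‖ + A (L' x) with hg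
  have hgcont : Continuous g := (Φ.continuous.norm).add (hA.continuous.comp L'.continuous)
  have hgnonneg : ∀ x, 0 ≤ g x := fun x => add_nonneg (norm_nonneg _) (hA.nonneg _)
  have hghom : ∀ (t : ℝ) (x : Euc N), g (t • x) = |t| * g x := by
    intro t x
    simp only [hg, map_smul, norm_smul, hA.2.1, Real.norm_eq_abs, mul_add]
  have hg0 : g 0 = 0 := by
    have h := hghom 0 0
    rwa [zero_smul, abs_zero, zero_mul] at h
  by_cases h0 : ∀ x : Euc N, x = 0
  · refine ⟨1, one_pos, fun x => ?_⟩
    rw [h0 x, norm_zero, mul_zero]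
    exact add_nonneg (norm_nonneg _) (hA.nonneg _)
  · push_neg at h0
    obtain ⟨x₀, hx₀⟩ := h0
    have hne : (Metric.sphere (0 : Euc N) 1).Nonempty := by
      refine ⟨‖x₀‖⁻¹ • x₀, ?_⟩
      have : ‖x₀‖ ≠ 0 := norm_ne_zero_iff.mpr hx₀
      simp [norm_smul, abs_of_nonneg (norm_nonneg x₀), inv_mul_cancel₀ this]
    obtain ⟨z, hz, hmin⟩ := (isCompact_sphere (0 : Euc N) 1).exists_isMinOn hne
      hgcont.continuousOn
    have hznorm : ‖z‖ = 1 := by simpa using hz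
    have hzne : z ≠ 0 := by intro h; rw [h] at hznorm; simp at hznorm
    have hgz : 0 < g z := by
      rcases lt_or_eq_of_le (hgnonneg z) with h | h
      · exact h
      · exfalso
        have hdef : g z = ‖Φ z‖ + A (L' z) := rfl
        rw [hdef] at h
        have h1 : ‖Φ z‖ = 0 := by linarith [norm_nonneg (Φ z), hA.nonneg (L' z)]
        have h2 : A (L' z) = 0 := by linarith [norm_nonneg (Φ z), hA.nonneg (L' z)]
        exact hzne (hker z (norm_eq_zero.mp h1) ((hA.1 _).mp h2))
    refine ⟨g z, hgz, fun x => ?_⟩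
    by_cases hx : x = 0
    · rw [hx, norm_zero, mul_zero]
      exact add_nonneg (norm_nonneg _) (hA.nonneg _)
    · have hnx : ‖x‖ ≠ 0 := norm_ne_zero_iff.mpr hx
      have hu : ‖x‖⁻¹ • x ∈ Metric.sphere (0 : Euc N) 1 := by
        simp [norm_smul, abs_of_nonneg (norm_nonneg x), inv_mul_cancel₀ hnx]
      have h1 : g z ≤ g (‖x‖⁻¹ • x) := hmin hu
      rw [hghom, abs_of_nonneg (inv_nonneg.mpr (norm_nonneg x))] at h1
      have hpos : 0 < ‖x‖ := lt_of_le_of_ne (norm_nonneg x) (Ne.symm hnx)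
      have h2 : g z * ‖x‖ ≤ (‖x‖⁻¹ * g x) * ‖x‖ := by nlinarith
      calc g z * ‖x‖ ≤ (‖x‖⁻¹ * g x) * ‖x‖ := h2
        _ = g x := by field_simp


theorem stmt8 {N M P : ℕ} (Φ : Euc N →L[ℝ] Euc M) (L : Euc P →L[ℝ] Euc N)
    (A : Euc P → ℝ) (hA : IsNorm A) :
    ∀ (y : Euc M) (lam : ℝ), 0 < lam →
      (({x : Euc N | ∀ z, obj Φ L A y lam x ≤ obj Φ L A y lam z}.Nonempty ∧
        IsCompact {x : Euc N | ∀ z, obj Φ L A y lam x ≤ obj Φ L A y lam z}) ↔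
       (∀ h : Euc N, Φ h = 0 → ContinuousLinearMap.adjoint L h = 0 → h = 0)) := by
  intro y lam hlam
  set f : Euc N → ℝ := obj Φ L A y lam with hf
  have hfcont : Continuous f := by
    rw [hf]
    unfold obj
    exact (continuous_const.mul (((continuous_const.sub Φ.continuous).norm).pow 2)).add
      (continuous_const.mul (hA.continuous.comp (ContinuousLinearMap.adjoint L).continuous))
  constructor
  · rintro ⟨⟨x₀, hx₀⟩, hcpt⟩ h hΦ hL
    by_contra hne
    have hmem : ∀ t : ℝ, (x₀ + t • h) ∈ {x : Euc N | ∀ z, f x ≤ f z} := by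
      intro t z
      have heq : f (x₀ + t • h) = f x₀ := by
        simp only [hf, obj, map_add, map_smul, hΦ, hL, smul_zero, add_zero]
      rw [heq]; exact hx₀ z
    obtain ⟨R, hR⟩ := hcpt.isBounded.subset_closedBall 0
    have hh : 0 < ‖h‖ := norm_pos_iff.mpr hne
    have hx₀R : ‖x₀‖ ≤ R := by
      have := hR (hmem 0)
      simpa using this
    set t := (R + ‖x₀‖ + 1) / ‖h‖ with ht
    have htpos : 0 < t := by
      apply div_pos _ hh
      linarith [norm_nonneg x₀]
    have h1 : ‖x₀ + t • h‖ ≤ R := by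
      have := hR (hmem t)
      simpa using this
    have h2 : ‖t • h‖ ≤ ‖x₀ + t • h‖ + ‖x₀‖ := by
      calc ‖t • h‖ = ‖(x₀ + t • h) - x₀‖ := by rw [add_sub_cancel_left]
        _ ≤ ‖x₀ + t • h‖ + ‖x₀‖ := norm_sub_le _ _
    have h3 : ‖t • h‖ = R + ‖x₀‖ + 1 := by
      rw [norm_smul, Real.norm_eq_abs, abs_of_pos htpos, ht, div_mul_cancel₀ _ (ne_of_gt hh)]
    linarith
  · intro hker
    obtain ⟨c, hc, hbound⟩ := coercive_bound Φ L hA hker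
    set S : Set (Euc N) := {x | f x ≤ f 0} with hS
    have hSclosed : IsClosed S := isClosed_le hfcont continuous_const
    have hf0 : f 0 = (1/2) * ‖y‖^2 := by
      simp [hf, obj, hA.zero]
    set B : ℝ := (2*‖y‖ + (1/2)*‖y‖^2/lam)/c with hB
    have hSsub : S ⊆ Metric.closedBall 0 B := by
      intro x hx
      have hx' : (1/2)*‖y - Φ x‖^2 + lam * A (ContinuousLinearMap.adjoint L x)
          ≤ (1/2)*‖y‖^2 := by
        have h := hx
        rw [hS, Set.mem_setOf_eq, hf0, hf] at h
        exact h
      have hAnn : 0 ≤ A (ContinuousLinearMap.adjoint L x) := hA.nonneg _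
      have hA1 : A (ContinuousLinearMap.adjoint L x) ≤ (1/2)*‖y‖^2 / lam := by
        rw [le_div_iff₀ hlam]
        nlinarith [sq_nonneg ‖y - Φ x‖]
      have hnorm1 : ‖y - Φ x‖ ≤ ‖y‖ := by
        have hsq : ‖y - Φ x‖^2 ≤ ‖y‖^2 := by nlinarith
        exact (pow_le_pow_iff_left₀ (norm_nonneg _) (norm_nonneg _) (by norm_num)).mp hsq
      have hΦx : ‖Φ x‖ ≤ 2*‖y‖ := by
        have h4 : ‖Φ x‖ ≤ ‖y - Φ x‖ + ‖y‖ := by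
          calc ‖Φ x‖ = ‖(Φ x - y) + y‖ := by rw [sub_add_cancel]
            _ ≤ ‖Φ x - y‖ + ‖y‖ := norm_add_le _ _
            _ = ‖y - Φ x‖ + ‖y‖ := by rw [norm_sub_rev]
        linarith
      have h5 := hbound x
      rw [Metric.mem_closedBall, dist_zero_right, hB, le_div_iff₀ hc]
      nlinarith
    have hScpt : IsCompact S :=
      (isCompact_closedBall (0 : Euc N) B).of_isClosed_subset hSclosed hSsub
    have hSne : S.Nonempty := ⟨0, show f 0 ≤ f 0 from le_refl _⟩
    obtain ⟨x₀, hx₀S, hmin⟩ := hScpt.exists_isMinOn hSne hfcont.continuousOn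
    have hglob : ∀ z, f x₀ ≤ f z := by
      intro z
      by_cases hz : z ∈ S
      · exact hmin hz
      · have h6 : f x₀ ≤ f 0 := hmin (show f 0 ≤ f 0 from le_refl _)
        have h7 : f 0 < f z := by
          rw [hS, Set.mem_setOf_eq] at hz
          exact lt_of_not_ge hz
        linarith
    refine ⟨⟨x₀, hglob⟩, ?_⟩
    have hKeq : {x : Euc N | ∀ z, f x ≤ f z} = ⋂ z, {x : Euc N | f x ≤ f z} := by
      ext x; simp [Set.mem_iInter]
    have hKclosed : IsClosed {x : Euc N | ∀ z, f x ≤ f z} := by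
      rw [hKeq]
      exact isClosed_iInter fun z => isClosed_le hfcont continuous_const
    have hKsub : {x : Euc N | ∀ z, f x ≤ f z} ⊆ S := fun x hx => hx 0
    exact hScpt.of_isClosed_subset hKclosed hKsub
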